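/- Every nonzero generalized power series F ∈ ℝ⟦X₁*,…,Xℓ*⟧ can be written in the form F(X) = X^{α₀}( X^{α₁} B₁(X) + ⋯ + X^{α_s} B_s(X) ) where s ≥ 1, the monomials X^{α₁},…,X^{α_s} have gcd 1 (no common monomial factor) and pairwise do not divide one another, and each Bᵢ is a generalized power series with nonzero constant term. -/

import Mathlib

/-- translate of a well-founded set of reals is well-founded -/
lemma wfTranslate {S : Set ℝ} (h : S.IsWF) (a : ℝ) : ((fun t => t + a) '' S).IsWF :=
  (h.isPWO.image_of_monotone (f := fun t => t + a) (fun _ _ hxy => by dsimp only; linarith)).isWF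

/-- Dickson-type lemma: a set of tuples with coordinates in well-founded
subsets of `ℝ` is partially well-ordered. -/
lemma piPWO {ℓ : ℕ} {T : Fin ℓ → Set ℝ} (hT : ∀ i, (T i).IsWF)
    (S : Set (Fin ℓ → ℝ)) (hS : ∀ r ∈ S, ∀ i, r i ∈ T i) : S.IsPWO := by
  haveI : ∀ i, IsWellFounded (T i) (· < ·) := fun i => ⟨hT i⟩
  haveI : ∀ i, IsWellOrder (T i) (· < ·) := fun i => { }
  have h1 : (Set.univ : Set (∀ i, T i)).IsPWO := Set.isPWO_of_wellQuasiOrderedLE _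
  have h2 : ((fun (f : ∀ i, T i) (i : Fin ℓ) => (f i : ℝ)) '' Set.univ).IsPWO :=
    h1.image_of_monotone (fun f g hfg i => Subtype.coe_le_coe.mpr (hfg i))
  refine h2.mono ?_
  intro r hr
  exact ⟨fun i => ⟨r i, hS r hr i⟩, Set.mem_univ _, rfl⟩

/-- Every nonzero generalized power series `F ∈ ℝ⟦X₁*,…,Xℓ*⟧` (coefficient
function `c`, support in a product of well-ordered subsets of `[0,∞)`) can be
written as `F = X^{α₀}(X^{α₁}B₁ + ⋯ + X^{α_s}B_s)` where the monomials
`X^{αᵢ}` have gcd `1`, pairwise do not divide one another, and each `Bᵢ` is a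
generalized power series with nonzero constant term. -/
theorem stmt16 (ℓ : ℕ) (c : (Fin ℓ → ℝ) → ℝ)
    (hne : ∃ r, c r ≠ 0)
    (hsupp : ∃ T : Fin ℓ → Set ℝ,
      (∀ i, (T i).WellFoundedOn (· < ·) ∧ T i ⊆ Set.Ici 0) ∧
      ∀ r : Fin ℓ → ℝ, c r ≠ 0 → ∀ i, r i ∈ T i) :
    ∃ s : ℕ, 1 ≤ s ∧ ∃ (α₀ : Fin ℓ → ℝ) (αs : Fin s → Fin ℓ → ℝ)
      (B : Fin s → (Fin ℓ → ℝ) → ℝ),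
      (∀ i, 0 ≤ α₀ i) ∧ (∀ k i, 0 ≤ αs k i) ∧
      (∀ k₁ k₂ : Fin s, k₁ ≠ k₂ → ¬ ∀ i, αs k₁ i ≤ αs k₂ i) ∧
      (∀ i, ∃ k, αs k i = 0) ∧
      (∀ k, B k 0 ≠ 0) ∧
      (∀ k, ∀ r : Fin ℓ → ℝ, B k r ≠ 0 → ∀ i, 0 ≤ r i) ∧
      (∀ k, ∃ T : Fin ℓ → Set ℝ,
        (∀ i, (T i).WellFoundedOn (· < ·) ∧ T i ⊆ Set.Ici 0) ∧
        ∀ r : Fin ℓ → ℝ, B k r ≠ 0 → ∀ i, r i ∈ T i) ∧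
      ∀ r : Fin ℓ → ℝ, c r = ∑ k, B k (r - α₀ - αs k) := by
  classical
  obtain ⟨T, hT, hTsupp⟩ := hsupp
  obtain ⟨r₀, hr₀⟩ := hne
  -- the componentwise minima of the support
  have hPwf : ∀ i, Set.IsWF ((fun r => r i) '' {r | c r ≠ 0}) := fun i =>
    Set.IsWF.mono (hT i).1 (by rintro _ ⟨r, hr, rfl⟩; exact hTsupp r hr i)
  have hPne : ∀ i, ((fun r => r i) '' {r | c r ≠ 0}).Nonempty :=
    fun i => ⟨r₀ i, r₀, hr₀, rfl⟩
  set α₀ : Fin ℓ → ℝ := fun i => (hPwf i).min (hPne i) with hα₀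
  have hα₀mem : ∀ i, ∃ r, c r ≠ 0 ∧ r i = α₀ i := by
    intro i
    obtain ⟨r, hr, h⟩ := (hPwf i).min_mem (hPne i)
    exact ⟨r, hr, h⟩
  have hα₀le : ∀ r, c r ≠ 0 → ∀ i, α₀ i ≤ r i := fun r hr i =>
    (hPwf i).min_le _ ⟨r, hr, rfl⟩
  have hα₀nn : ∀ i, 0 ≤ α₀ i := by
    intro i
    obtain ⟨r, hr, h⟩ := hα₀mem i
    have := (hT i).2 (hTsupp r hr i)
    rw [h] at this; exact this
  -- the shifted coefficient function and its support
  set c' : (Fin ℓ → ℝ) → ℝ := fun q => c (q + α₀) with hc'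
  set S' : Set (Fin ℓ → ℝ) := {q | c' q ≠ 0} with hS'
  have hS'nn : ∀ q ∈ S', ∀ i, 0 ≤ q i := by
    intro q hq i
    have h := hα₀le _ hq i
    simp only [Pi.add_apply] at h
    linarith
  have hS'T : ∀ q ∈ S', ∀ i, q i ∈ (fun t => t + (-(α₀ i))) '' T i := by
    intro q hq i
    exact ⟨q i + α₀ i, by simpa using hTsupp _ hq i, by ring⟩
  have hS'pwo : S'.IsPWO :=
    piPWO (fun i => wfTranslate (hT i).1 _) S' hS'T
  -- minimal elements of the shifted support
  set M : Set (Fin ℓ → ℝ) := {q | q ∈ S' ∧ ∀ p ∈ S', p ≤ q → p = q} with hM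
  have hMsub : M ⊆ S' := fun q hq => hq.1
  have hminex : ∀ q ∈ S', ∃ m ∈ M, m ≤ q := by
    intro q hq
    set D := {p | p ∈ S' ∧ p ≤ q} with hD
    have hDwf : D.WellFoundedOn (· < ·) :=
      (hS'pwo.isWF).subset (fun p hp => hp.1)
    obtain ⟨m, hmD, hmmin⟩ :=
      (Set.wellFoundedOn_iff.mp hDwf).has_min D ⟨q, hq, le_refl q⟩
    refine ⟨m, ⟨hmD.1, ?_⟩, hmD.2⟩
    intro p hp hpm
    by_contra hne'
    exact hmmin p ⟨hp, hpm.trans hmD.2⟩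
      ⟨lt_of_le_of_ne hpm hne', ⟨hp, hpm.trans hmD.2⟩, hmD⟩
  have hMfin : M.Finite := by
    have hanti : IsAntichain (· ≤ ·) M := by
      intro a ha b hb hab hle
      exact hab (hb.2 a ha.1 hle)
    exact hanti.finite_of_partiallyWellOrderedOn (hS'pwo.mono hMsub)
  have hq₀ : (r₀ - α₀) ∈ S' := by
    simp only [hS', hc', Set.mem_setOf_eq, sub_add_cancel]
    exact hr₀
  have hMne : M.Nonempty := by
    obtain ⟨m, hm, _⟩ := hminex _ hq₀
    exact ⟨m, hm⟩
  -- enumerate the minimal elements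
  set s := hMfin.toFinset.card with hs
  have hs1 : 1 ≤ s :=
    Finset.card_pos.mpr (by simpa [Set.Finite.toFinset] using hMne)
  set e := hMfin.toFinset.equivFin with he
  set αs : Fin s → Fin ℓ → ℝ := fun k => ((e.symm k : hMfin.toFinset) : Fin ℓ → ℝ) with hαs
  have hαsM : ∀ k, αs k ∈ M := fun k => hMfin.mem_toFinset.mp (e.symm k).2
  have hαsinj : Function.Injective αs := fun k₁ k₂ h =>
    e.symm.injective (Subtype.ext h)
  have hsurj : ∀ m ∈ M, ∃ k, αs k = m := by
    intro m hm
    refine ⟨e ⟨m, hMfin.mem_toFinset.mpr hm⟩, ?_⟩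
    simp [hαs]
  have hanti' : ∀ k₁ k₂, k₁ ≠ k₂ → ¬ αs k₁ ≤ αs k₂ := fun k₁ k₂ hne h =>
    hne (hαsinj ((hαsM k₂).2 _ (hαsM k₁).1 h))
  -- the coefficient functions B
  set K : (Fin ℓ → ℝ) → Finset (Fin s) :=
    fun q => Finset.univ.filter (fun k => αs k ≤ q) with hK
  set B : Fin s → (Fin ℓ → ℝ) → ℝ := fun k q =>
    if (∀ i, 0 ≤ q i) ∧ (K (q + αs k)).min = (k : WithTop (Fin s))
    then c' (q + αs k) else 0 with hB
  refine ⟨s, hs1, α₀, αs, B, hα₀nn, ?_, ?_, ?_, ?_, ?_, ?_, ?_⟩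
  · exact fun k i => hS'nn _ (hMsub (hαsM k)) i
  · exact fun k₁ k₂ h hle => hanti' k₁ k₂ h (fun i => hle i)
  · -- gcd of the monomials is 1
    intro i
    obtain ⟨r, hr, hri⟩ := hα₀mem i
    have hq : (r - α₀) ∈ S' := by
      simp only [hS', hc', Set.mem_setOf_eq, sub_add_cancel]
      exact hr
    obtain ⟨m, hm, hmle⟩ := hminex _ hq
    obtain ⟨k, hk⟩ := hsurj m hm
    refine ⟨k, le_antisymm ?_ ?_⟩
    · have h2 : m i ≤ (r - α₀) i := hmle i
      simp only [Pi.sub_apply, hri] at h2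
      rw [hk]; linarith
    · rw [hk]; exact hS'nn m (hMsub hm) i
  · -- nonzero constant terms
    intro k
    have hkm : αs k ∈ S' := hMsub (hαsM k)
    have hK1 : K ((0 : Fin ℓ → ℝ) + αs k) = {k} := by
      rw [zero_add]
      ext j
      simp only [hK, Finset.mem_filter, Finset.mem_univ, true_and,
        Finset.mem_singleton]
      constructor
      · intro hj
        by_contra hne'
        exact hanti' j k hne' hj
      · rintro rfl; exact le_refl _
    have : B k 0 = c' ((0 : Fin ℓ → ℝ) + αs k) := by
      rw [hB]
      exact if_pos ⟨fun i => le_refl 0, by rw [hK1]; exact Finset.min_singleton⟩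
    rw [this, zero_add]
    exact hkm
  · -- nonnegative support
    intro k r h
    rw [hB] at h
    dsimp only at h
    split_ifs at h with hc
    · exact hc.1
    · exact absurd rfl h
  · -- well-ordered support
    intro k
    refine ⟨fun i => ((fun t => t + (-(α₀ i + αs k i))) '' T i) ∩ Set.Ici 0,
      fun i => ⟨(wfTranslate (hT i).1 _).mono Set.inter_subset_left,
        Set.inter_subset_right⟩, ?_⟩
    intro r hr i
    rw [hB] at hr
    dsimp only at hr
    split_ifs at hr with hc
    · have hT' : ((r + αs k) + α₀) i ∈ T i := hTsupp _ hr i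
      refine ⟨⟨((r + αs k) + α₀) i, hT', ?_⟩, hc.1 i⟩
      simp only [Pi.add_apply]; ring
    · exact absurd rfl hr
  · -- the decomposition identity
    intro r
    have hcq : c r = c' (r - α₀) := by simp [hc', sub_add_cancel]
    have hterm : ∀ k, B k (r - α₀ - αs k) =
        if (K (r - α₀)).min = (k : WithTop (Fin s)) then c' (r - α₀) else 0 := by
      intro k
      have hq' : r - α₀ - αs k + αs k = r - α₀ := sub_add_cancel _ _
      rw [hB]
      simp only [hq']
      by_cases hmin' : (K (r - α₀)).min = (k : WithTop (Fin s))
      · have hkK : k ∈ K (r - α₀) := Finset.mem_of_min hmin'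
        have hle : αs k ≤ r - α₀ := (Finset.mem_filter.mp hkK).2
        rw [if_pos ⟨fun i => by have := hle i; simp only [Pi.sub_apply] at *; linarith,
          hmin'⟩, if_pos hmin']
      · rw [if_neg (fun hcnd => hmin' hcnd.2), if_neg hmin']
    rw [hcq]
    rw [Finset.sum_congr rfl (fun k _ => hterm k)]
    by_cases hne' : (K (r - α₀)).Nonempty
    · obtain ⟨k₀, hk₀⟩ := Finset.min_of_nonempty hne'
      rw [Finset.sum_eq_single k₀]
      · rw [if_pos hk₀]
      · intro b _ hb
        rw [if_neg]
        rw [hk₀]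
        intro h
        exact hb (by exact_mod_cast h.symm)
      · intro h; exact absurd (Finset.mem_univ k₀) h
    · have hKe : K (r - α₀) = ∅ := Finset.not_nonempty_iff_eq_empty.mp hne'
      have hc0 : c' (r - α₀) = 0 := by
        by_contra h
        obtain ⟨m, hm, hmle⟩ := hminex _ h
        obtain ⟨k, hk⟩ := hsurj m hm
        have : k ∈ K (r - α₀) := by
          simp only [hK, Finset.mem_filter, Finset.mem_univ, true_and]
          rw [hk]; exact hmle
        rw [hKe] at this
        exact absurd this (Finset.notMem_empty k)
      simp [hKe, hc0]
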